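/- Let p be a rank one projection in a complex semisimple unital Banach algebra A, and let J_p denote the two-sided ideal generated by p. If q is a rank one projection belonging to J_p, then q ∈ ApA, i.e., q = x p y for some x, y ∈ A. -/
import Mathlib


noncomputable section

/-- A rank one (minimal) projection: a nonzero idempotent `p` with `p A p = ℂ p`. -/
def IsMinimalProjection {A : Type*} [Ring A] [Algebra ℂ A] (p : A) : Prop :=
  p ≠ 0 ∧ IsIdempotentElem p ∧ ∀ a : A, ∃ c : ℂ, p * a * p = c • p

/-- The two-sided ideal generated by `p`: finite sums `∑ xᵢ p yᵢ`. -/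
def idealGen {A : Type*} [Ring A] (p : A) : Set A :=
  {a | ∃ (n : ℕ) (x y : Fin n → A), a = ∑ i, x i * p * y i}

theorem mem_idealGen_imp_mem_ApA {A : Type*} [NormedRing A] [NormedAlgebra ℂ A]
    [CompleteSpace A]
    (hss : ∀ a : A, (∀ x : A, spectrum ℂ (a * x) ⊆ {0}) → a = 0)
    (p q : A) (hp : IsMinimalProjection p) (hq : IsMinimalProjection q)
    (hqJ : q ∈ idealGen p) :
    ∃ x y : A, q = x * p * y := by
  obtain ⟨hq0, hqi, hqs⟩ := hq
  obtain ⟨hp0, hpi, hps⟩ := hp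
  obtain ⟨n, x, y, hsum⟩ := hqJ
  have hq2 : ∀ z : A, q * (q * z) = q * z := fun z => by rw [← mul_assoc, hqi]
  have hp2 : ∀ z : A, p * (p * z) = p * z := fun z => by rw [← mul_assoc, hpi]
  -- choose the scalars c i j with p * (y i * q * x j) * p = c i j • p
  have hc : ∀ i j : Fin n, ∃ c : ℂ, p * (y i * q * x j) * p = c • p :=
    fun i j => hps (y i * q * x j)
  choose c hc using hc
  have hcz : ∀ (i j : Fin n) (z : A),
      p * (y i * (q * (x j * (p * z)))) = c i j • (p * z) := by
    intro i j z
    have := congrArg (· * z) (hc i j)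
    simpa only [mul_assoc, smul_mul_assoc] using this
  -- q = ∑ i, (q * x i * p) * (y i * q)
  have hq3 : q = ∑ i, (q * x i * p) * (y i * q) := by
    have h1 : q * q * q = q := by rw [hqi, hqi]
    have h2 : q * q * q = q * (∑ i, x i * p * y i) * q :=
      congrArg (fun z => q * z * q) hsum
    calc q = q * (∑ i, x i * p * y i) * q := by rw [← h2, h1]
      _ = ∑ i, q * (x i * p * y i) * q := by rw [Finset.mul_sum, Finset.sum_mul]
      _ = ∑ i, (q * x i * p) * (y i * q) := by
          refine Finset.sum_congr rfl fun i _ => ?_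
          simp only [mul_assoc]
  -- some c i j must be nonzero
  have hex : ∃ i j, c i j ≠ 0 := by
    by_contra h
    push_neg at h
    apply hq0
    have h2 : q = (∑ i, (q * x i * p) * (y i * q)) * (∑ j, (q * x j * p) * (y j * q)) := by
      rw [← hq3, hqi]
    rw [h2, Finset.sum_mul_sum]
    refine Finset.sum_eq_zero fun i _ => Finset.sum_eq_zero fun j _ => ?_
    have hz := hcz i j (y j * q)
    simp only [mul_assoc, hq2]
    rw [hz, h i j, zero_smul, mul_zero, mul_zero]
  obtain ⟨i, j, hc0⟩ := hex
  obtain ⟨d, hd⟩ := hqs (x j * p * y i)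
  have hdne : d ≠ 0 := by
    intro hd0
    apply hc0
    rw [hd0, zero_smul] at hd
    have hr0 : ∀ z : A, q * (x j * (p * (y i * (q * z)))) = 0 := by
      intro z
      have := congrArg (· * z) hd
      simpa only [mul_assoc, zero_mul] using this
    have h3 : (c i j • p) * (c i j • p) = 0 := by
      rw [← hc i j]
      simp only [mul_assoc, hp2]
      rw [hr0, mul_zero, mul_zero]
    rw [smul_mul_smul_comm, hpi, smul_eq_zero] at h3
    rcases h3 with h3 | h3
    · exact mul_self_eq_zero.mp h3
    · exact absurd h3 hp0
  refine ⟨d⁻¹ • (q * x j), y i * q, ?_⟩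
  have h4 : (d⁻¹ • (q * x j)) * p * (y i * q) = d⁻¹ • (q * (x j * p * y i) * q) := by
    simp only [smul_mul_assoc, mul_assoc]
  rw [h4, hd, smul_smul, inv_mul_cancel₀ hdne, one_smul]
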